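/- arXiv:1402.6539 — 2 statements merged into one kernel-verified Lean document; each statement's English description precedes it below -/
import Mathlib

section
/- For every natural number n ≥ 1 and every real x ≥ 1, the n-th Legendre polynomial satisfies P_n'(x)/P_n(x) ≤ n²(2n+1)/((n+1)x + (2n²-1)√(x²-1)), and moreover the right-hand side does not exceed 2n²/(x + (2n-1)√(x²-1)). -/
open Polynomial

noncomputable def gP (n : ℕ) : ℝ[X] := ((X:ℝ[X])^2 - 1)^n
noncomputable def RP (n : ℕ) : ℝ[X] := derivative^[n] (gP n)

lemma iterD_add (k : ℕ) : ∀ p q : ℝ[X],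
    derivative^[k] (p + q) = derivative^[k] p + derivative^[k] q := by
  induction k with
  | zero => intro p q; simp
  | succ k ih => intro p q; simp [Function.iterate_succ_apply, ih]

lemma derivX2 : derivative ((X:ℝ[X])^2 - 1) = 2 * X := by
  simp [derivative_X_pow, map_ofNat]
  norm_num

lemma helper1 (m : ℕ) : ∀ q : ℝ[X],
    derivative^[m+1] (X * q) = X * derivative^[m+1] q + (m+1) • derivative^[m] q := by
  induction m with
  | zero => intro q; simp [derivative_mul]; ring
  | succ m ih =>
    intro q
    rw [Function.iterate_succ_apply, derivative_mul, derivative_X, one_mul,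
      iterD_add, ih (derivative q), ← Function.iterate_succ_apply,
      ← Function.iterate_succ_apply]
    simp only [nsmul_eq_mul]
    push_cast
    ring

lemma helper2 (m : ℕ) : ∀ q : ℝ[X],
    derivative^[m+2] (((X:ℝ[X])^2-1) * q) = ((X:ℝ[X])^2-1) * derivative^[m+2] q
      + (2*(m+2)) • (X * derivative^[m+1] q) + ((m+2)*(m+1)) • derivative^[m] q := by
  induction m with
  | zero =>
    intro q
    have e2 : (⇑(derivative (R := ℝ)))^[2] (((X:ℝ[X])^2-1) * q)
        = derivative (derivative (((X:ℝ[X])^2-1) * q)) := rfl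
    have e2' : ∀ r : ℝ[X], (⇑(derivative (R := ℝ)))^[2] r = derivative (derivative r) := fun r => rfl
    rw [e2, e2']
    simp only [derivative_mul, derivX2, derivative_X, Function.iterate_one,
      nsmul_eq_mul]
    push_cast
    ring_nf
    simp [derivative_mul, map_ofNat]
    rw [show derivative ((X:ℝ[X])^2) = 2 * X from by
      rw [← derivX2, derivative_sub, derivative_one, sub_zero]]
    ring
  | succ m ih =>
    intro q
    rw [Function.iterate_succ_apply, derivative_mul, derivX2, iterD_add, ih (derivative q)]
    have h1 : derivative^[m+2] (2 * X * q)
        = 2 * (X * derivative^[m+2] q + ((m+2):ℕ) • derivative^[m+1] q) := by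
      have h : (2:ℝ[X]) * X * q = C (2:ℝ) * (X * q) := by
        simp [map_ofNat]; ring
      rw [h, iterate_derivative_C_mul, helper1 (m+1) q]
      simp only [map_ofNat]
    rw [h1, ← Function.iterate_succ_apply, ← Function.iterate_succ_apply,
      ← Function.iterate_succ_apply]
    simp only [nsmul_eq_mul]
    push_cast
    ring

lemma gP_succ (n : ℕ) : gP (n+1) = ((X:ℝ[X])^2-1) * gP n := by
  simp [gP, pow_succ]; ring

lemma derivg (n : ℕ) : derivative (gP (n+1)) = (2*(n+1)) • (X * gP n) := by
  rw [gP, derivative_pow, derivX2]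
  simp only [nsmul_eq_mul, gP, Nat.add_sub_cancel, map_add, C_1, C_eq_natCast]
  push_cast
  ring

lemma RP_zero : RP 0 = 1 := by simp [RP, gP]

lemma RP_one : RP 1 = 2 * X := by
  simp [RP, gP, Function.iterate_one, derivX2, map_ofNat]
  norm_num

lemma deriv_RP_comm (n : ℕ) (k : ℕ) :
    derivative (derivative^[k] (gP n)) = derivative^[k] (derivative (gP n)) := by
  rw [← Function.iterate_succ_apply' derivative, Function.iterate_succ_apply]

lemma iter_shift (j : ℕ) (p : ℝ[X]) :
    derivative^[j] (derivative p) = derivative^[j+1] p :=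
  (Function.iterate_succ_apply derivative j p).symm

lemma iter_shift' (j : ℕ) (p : ℝ[X]) :
    derivative (derivative^[j] p) = derivative^[j+1] p :=
  (Function.iterate_succ_apply' derivative j p).symm

-- Lemma III (poly): R_{n+1}' = 2(n+1) X R_n' + 2(n+1)^2 R_n
lemma IIIpoly (n : ℕ) : derivative (RP (n+1)) =
    (2*(n+1)) • (X * derivative (RP n)) + (2*(n+1)*(n+1)) • RP n := by
  rw [RP, deriv_RP_comm, derivg, iterate_derivative_smul, helper1 n (gP n)]
  rw [RP, ← iter_shift']
  simp only [smul_add, smul_smul, nsmul_eq_mul, RP]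
  push_cast
  ring

-- (X^2-1) * (gP (k+1))' = 2(k+1) X * gP (k+1)
lemma odebase (k : ℕ) : ((X:ℝ[X])^2-1) * derivative (gP (k+1))
    = (2*(k+1)) • (X * gP (k+1)) := by
  rw [derivg, gP_succ, mul_smul_comm]
  congr 1
  ring

-- ODE: (X^2-1) R_n'' + 2X R_n' = n(n+1) R_n for n = k+1
lemma ode (k : ℕ) : ((X:ℝ[X])^2-1) * derivative (derivative (RP (k+1)))
    + 2*X*derivative (RP (k+1)) = ((k+1)*(k+2)) • RP (k+1) := by
  have h := congrArg (derivative^[k+2]) (odebase k)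
  rw [helper2 k (derivative (gP (k+1))), iterate_derivative_smul,
    helper1 (k+1) (gP (k+1))] at h
  rw [iter_shift, iter_shift] at h
  have e1 : (⇑derivative)^[k+1+1+1] (gP (k+1)) = derivative (derivative (RP (k+1))) := by
    rw [RP, iter_shift', iter_shift']
  have e2 : (⇑derivative)^[k+1+1] (gP (k+1)) = derivative (RP (k+1)) := by
    rw [RP, iter_shift']
  have e3 : (⇑derivative)^[k+2] (gP (k+1)) = derivative (RP (k+1)) := by
    rw [RP, iter_shift']
  rw [show (⇑derivative)^[k] (derivative (gP (k+1))) = RP (k+1) from by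
    rw [iter_shift, RP]] at h
  rw [show (⇑derivative)^[k+1] (gP (k+1)) = RP (k+1) from rfl] at h
  rw [show k+2+1 = k+1+1+1 from rfl, e1, e2] at h
  simp only [smul_add, smul_smul, nsmul_eq_mul] at h ⊢
  push_cast at h ⊢
  linear_combination h

lemma dvd_deriv (j : ℕ) (p : ℝ[X]) (h : ((X:ℝ[X]) - 1)^(j+1) ∣ p) :
    ((X:ℝ[X]) - 1)^j ∣ derivative p := by
  obtain ⟨r, rfl⟩ := h
  refine ⟨C ((j:ℝ)+1) * r + ((X:ℝ[X]) - 1) * derivative r, ?_⟩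
  rw [derivative_mul, derivative_pow]
  simp only [derivative_sub, derivative_X, derivative_one, sub_zero, mul_one,
    Nat.add_sub_cancel, map_add, map_one, C_eq_natCast]
  push_cast
  ring

lemma dvd_iter (k : ℕ) : ∀ (j : ℕ) (p : ℝ[X]), ((X:ℝ[X]) - 1)^(k+j) ∣ p →
    ((X:ℝ[X]) - 1)^j ∣ derivative^[k] p := by
  induction k with
  | zero => intro j p h; simpa using h
  | succ k ih =>
    intro j p h
    rw [Function.iterate_succ_apply]
    refine ih j (derivative p) (dvd_deriv _ _ ?_)
    have : k + 1 + j = k + (j + 1) := by omega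
    rwa [this] at h

lemma eval1_iter (n k : ℕ) (h : k < n) : ((derivative^[k] (gP n)).eval 1) = 0 := by
  have hd : ((X:ℝ[X]) - 1)^n ∣ gP n := by
    refine ⟨((X:ℝ[X]) + 1)^n, ?_⟩
    rw [gP, ← mul_pow]
    congr 1
    ring
  obtain ⟨j, hj⟩ : ∃ j, n = k + (j + 1) := ⟨n - k - 1, by omega⟩
  have h2 : ((X:ℝ[X]) - 1)^(j+1) ∣ derivative^[k] (gP n) := by
    refine dvd_iter k (j+1) _ ?_
    rwa [← hj]
  obtain ⟨r, hr⟩ := h2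
  rw [hr]
  simp

-- integrated ODE: (X^2-1) R_{m+1}' = (m+1)(m+2) • D^[m] g_{m+1}
lemma int_ode (m : ℕ) : ((X:ℝ[X])^2-1) * derivative (RP (m+1))
    = ((m+1)*(m+2)) • derivative^[m] (gP (m+1)) := by
  set p := ((X:ℝ[X])^2-1) * derivative (RP (m+1)) with hp
  set q := (((m+1)*(m+2)) • derivative^[m] (gP (m+1)) : ℝ[X]) with hq
  have hder : derivative (p - q) = 0 := by
    rw [derivative_sub, hp, hq, derivative_mul, derivative_smul]
    rw [show derivative ((⇑derivative)^[m] (gP (m+1))) = RP (m+1) from by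
      rw [iter_shift']; rfl]
    have := ode m
    rw [derivX2]
    linear_combination this
  have hc := eq_C_of_derivative_eq_zero hder
  have hev : (p - q).eval 1 = 0 := by
    rw [eval_sub, hp, hq]
    simp only [eval_mul, eval_smul, eval_sub, eval_pow, eval_X, eval_one]
    rw [eval1_iter (m+1) m (by omega)]
    norm_num
  rw [hc] at hev
  simp only [eval_C] at hev
  have h0 : p - q = 0 := by rw [hc, hev, map_zero]
  exact sub_eq_zero.mp h0

-- Lemma K: R_{n+1} = 2 (X^2-1) R_n' + 2(n+1) X R_n
lemma Kpoly (n : ℕ) : RP (n+1) = 2 • (((X:ℝ[X])^2-1) * derivative (RP n))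
    + (2*(n+1)) • (X * RP n) := by
  cases n with
  | zero =>
    rw [RP_one, RP_zero]
    simp only [derivative_one, mul_zero, smul_zero, zero_add, mul_one, nsmul_eq_mul]
    push_cast
    ring
  | succ m =>
    have hg : gP (m+2) = ((X:ℝ[X])^2-1) * gP (m+1) := gP_succ (m+1)
    have h : RP (m+2) = derivative^[m+2] (((X:ℝ[X])^2-1) * gP (m+1)) := by
      rw [RP, hg]
    rw [h, helper2 m (gP (m+1))]
    rw [show (⇑derivative)^[m+2] (gP (m+1)) = derivative (RP (m+1)) from by
      rw [RP, iter_shift']]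
    rw [show (⇑derivative)^[m+1] (gP (m+1)) = RP (m+1) from rfl]
    rw [show ((m+2)*(m+1)) • (⇑derivative)^[m] (gP (m+1))
        = ((X:ℝ[X])^2-1) * derivative (RP (m+1)) from by
      rw [show (m+2)*(m+1) = (m+1)*(m+2) from by ring, int_ode m]]
    simp only [nsmul_eq_mul]
    push_cast
    ring

lemma RP_eval_one (n : ℕ) : (RP n).eval 1 = 2^n * n.factorial := by
  induction n with
  | zero => simp [RP_zero]
  | succ n ih =>
    have h := congrArg (eval 1) (Kpoly n)
    simp only [eval_add, eval_smul, eval_mul, eval_sub, eval_pow, eval_X, eval_one,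
      smul_eq_mul] at h
    rw [h, ih, Nat.factorial_succ]
    push_cast
    ring

/-- The `n`-th Legendre polynomial, via Rodrigues' formula
`P_n(x) = (1/(2^n n!)) dⁿ/dxⁿ (x²-1)ⁿ`. -/
noncomputable def legendreP (n : ℕ) : ℝ → ℝ := fun x =>
  (1 / (2 ^ n * (n.factorial : ℝ))) * iteratedDeriv n (fun y => (y ^ 2 - 1) ^ n) x

lemma iterDeriv_poly (k : ℕ) : ∀ (p : ℝ[X]),
    iteratedDeriv k (fun y => p.eval y) = fun x => (derivative^[k] p).eval x := by
  induction k with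
  | zero => intro p; simp [iteratedDeriv_zero]
  | succ k ih =>
    intro p
    rw [iteratedDeriv_succ', show deriv (fun y => p.eval y) = fun y => (derivative p).eval y
      from funext fun y => p.deriv, ih (derivative p)]
    funext z
    rw [Function.iterate_succ_apply]

lemma legendreP_eq (n : ℕ) (x : ℝ) :
    legendreP n x = (1 / (2 ^ n * (n.factorial : ℝ))) * (RP n).eval x := by
  unfold legendreP
  congr 1
  have h : (fun y:ℝ => (y^2-1)^n) = fun y => (gP n).eval y := by
    funext y; simp [gP]
  rw [h, iterDeriv_poly]
  rfl

lemma deriv_legendreP (n : ℕ) (x : ℝ) :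
    deriv (legendreP n) x = (1 / (2 ^ n * (n.factorial : ℝ))) * (derivative (RP n)).eval x := by
  have h : legendreP n = fun y => (C (1 / (2 ^ n * (n.factorial : ℝ))) * RP n).eval y := by
    funext y; rw [legendreP_eq]; simp
  rw [h, Polynomial.deriv, derivative_C_mul]
  simp

lemma leg0 (x : ℝ) : legendreP 0 x = 1 := by simp [legendreP_eq, RP_zero]

lemma leg1 (x : ℝ) : legendreP 1 x = x := by
  rw [legendreP_eq, RP_one]
  norm_num
  ring

lemma fact_ne (n : ℕ) : ((n.factorial : ℝ)) ≠ 0 := by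
  exact_mod_cast n.factorial_ne_zero

lemma II' (n : ℕ) (x : ℝ) : ((n:ℝ)+1) * legendreP (n+1) x
    = (x^2-1) * deriv (legendreP n) x + ((n:ℝ)+1)*x*legendreP n x := by
  have hK := congrArg (eval x) (Kpoly n)
  simp only [eval_add, eval_smul, eval_mul, eval_sub, eval_pow, eval_X, eval_one,
    smul_eq_mul] at hK
  rw [legendreP_eq, deriv_legendreP, legendreP_eq, hK, Nat.factorial_succ]
  have h2 : (2:ℝ)^(n+1) = 2 * 2^n := by ring
  push_cast
  field_simp
  ring

lemma III' (n : ℕ) (x : ℝ) : deriv (legendreP (n+1)) x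
    = x * deriv (legendreP n) x + ((n:ℝ)+1) * legendreP n x := by
  have hK := congrArg (eval x) (IIIpoly n)
  simp only [eval_add, eval_smul, eval_mul, eval_sub, eval_pow, eval_X, eval_one,
    smul_eq_mul] at hK
  rw [deriv_legendreP, deriv_legendreP, legendreP_eq, hK, Nat.factorial_succ]
  push_cast
  field_simp
  ring

lemma rel1 (n : ℕ) (x : ℝ) : (x^2-1) * deriv (legendreP (n+1)) x
    = ((n:ℝ)+1) * (x * legendreP (n+1) x - legendreP n x) := by
  have h2 := II' n x
  have h3 := III' n x
  have hx2 : (x^2-1) * deriv (legendreP (n+1)) x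
      = x * ((x^2-1) * deriv (legendreP n) x) + ((n:ℝ)+1) * (x^2-1) * legendreP n x := by
    rw [h3]; ring
  rw [hx2]
  have : (x^2-1) * deriv (legendreP n) x = ((n:ℝ)+1) * legendreP (n+1) x
      - ((n:ℝ)+1)*x*legendreP n x := by linarith [h2]
  rw [this]
  ring

lemma bonnet (n : ℕ) (x : ℝ) : ((n:ℝ)+2) * legendreP (n+2) x
    = (2*(n:ℝ)+3)*x*legendreP (n+1) x - ((n:ℝ)+1)*legendreP n x := by
  have h2 := II' (n+1) x
  have h1 := rel1 n x
  push_cast at h2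
  linarith [h2, h1]

lemma val_one (n : ℕ) : legendreP n 1 = 1 := by
  rw [legendreP_eq, RP_eval_one]
  field_simp

lemma dval_one (n : ℕ) : deriv (legendreP n) 1 = (n:ℝ)*((n:ℝ)+1)/2 := by
  induction n with
  | zero =>
    rw [deriv_legendreP, RP_zero]
    simp
  | succ n ih =>
    have h := III' n 1
    rw [ih, val_one] at h
    rw [h]
    push_cast
    ring

lemma mono (x : ℝ) (hx : 1 ≤ x) :
    ∀ n, 1 ≤ legendreP n x ∧ legendreP n x ≤ legendreP (n+1) x := by
  intro n
  induction n with
  | zero =>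
    constructor
    · rw [leg0]
    · rw [leg0, leg1]; exact hx
  | succ n ih =>
    obtain ⟨h1, h2⟩ := ih
    have hb := bonnet n x
    constructor
    · linarith
    · nlinarith [hb, h1, h2, hx, mul_nonneg (by positivity : (0:ℝ) ≤ 2*(n:ℝ)+3)
        (mul_nonneg (by linarith : (0:ℝ) ≤ x - 1) (by linarith : (0:ℝ) ≤ legendreP (n+1) x))]

set_option maxHeartbeats 1000000 in
lemma stepA (x s v P0 P1 P2 : ℝ) (hx : 1 ≤ x) (hs0 : 0 ≤ s) (hs2 : s^2 = x^2-1)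
    (hv : 2 ≤ v) (hP0 : 1 ≤ P0) (hP1 : 1 ≤ P1)
    (hb : v*P2 = (2*v-1)*x*P1 - (v-1)*P0)
    (hIH : (x*(v*x + (2*(v-1)^2-1)*s) - (v-1)*(2*(v-1)+1)*(x^2-1)) * P1
      ≤ (v*x + (2*(v-1)^2-1)*s) * P0) :
    (x*((v+1)*x + (2*v^2-1)*s) - v*(2*v+1)*(x^2-1)) * P2
      ≤ ((v+1)*x + (2*v^2-1)*s) * P1 := by
  have hsx : s ≤ x := by nlinarith [hs2, hs0, hx]
  have hxs1 : x*(x-s) ≤ 1 := by nlinarith [hs2, mul_nonneg hs0 (by linarith : (0:ℝ) ≤ x - s)]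
  have hD1pos : (0:ℝ) < v*x + (2*(v-1)^2-1)*s := by nlinarith [hs0, hx, hv]
  have hA2nn : (0:ℝ) ≤ x*((v+1)*x + (2*v^2-1)*s) - v*(2*v+1)*(x^2-1) := by
    nlinarith [mul_nonneg (by nlinarith : (0:ℝ) ≤ 2*v^2-1) (by linarith : (0:ℝ) ≤ 1 - x*(x-s))]
  have key : 2*(v*(((v+1)*x + (2*v^2-1)*s))*((v*x + (2*(v-1)^2-1)*s))
      - (x*((v+1)*x + (2*v^2-1)*s) - v*(2*v+1)*(x^2-1))
        * ((2*v-1)*x*(v*x + (2*(v-1)^2-1)*s)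
          - (v-1)*(x*(v*x + (2*(v-1)^2-1)*s) - (v-1)*(2*(v-1)+1)*(x^2-1))))
      = s^2*((3*v-1)*(2*v^2-1)*(x-s)^2 + (2*v-1)*(v-1)) := by
    linear_combination ((8*v^5-16*v^4+6*v^3+4*v^2-2*v) + s^2*(-6*v^3+2*v^2+3*v-1)
      + x*s*(12*v^3-4*v^2-6*v+2) + x^2*(-8*v^5+16*v^4-12*v^3-4*v^2+8*v-2)) * hs2
  have hc : (0:ℝ) ≤ s^2*((3*v-1)*(2*v^2-1)*(x-s)^2 + (2*v-1)*(v-1)) := by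
    have h1 : (0:ℝ) ≤ (3*v-1)*(2*v^2-1)*(x-s)^2 :=
      mul_nonneg (mul_nonneg (by linarith) (by nlinarith)) (sq_nonneg _)
    have h2 : (0:ℝ) ≤ (2*v-1)*(v-1) := mul_nonneg (by linarith) (by linarith)
    exact mul_nonneg (sq_nonneg s) (by linarith)
  have hstar : (x*((v+1)*x + (2*v^2-1)*s) - v*(2*v+1)*(x^2-1))
      * ((2*v-1)*x*(v*x + (2*(v-1)^2-1)*s)
        - (v-1)*(x*(v*x + (2*(v-1)^2-1)*s) - (v-1)*(2*(v-1)+1)*(x^2-1)))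
      ≤ v*(((v+1)*x + (2*v^2-1)*s))*((v*x + (2*(v-1)^2-1)*s)) := by linarith
  have hE : (v*(v*x + (2*(v-1)^2-1)*s))
      * ((x*((v+1)*x + (2*v^2-1)*s) - v*(2*v+1)*(x^2-1)) * P2)
      = (x*((v+1)*x + (2*v^2-1)*s) - v*(2*v+1)*(x^2-1)) * (v*x + (2*(v-1)^2-1)*s)
          * ((2*v-1)*x*P1)
        - (x*((v+1)*x + (2*v^2-1)*s) - v*(2*v+1)*(x^2-1)) * (v*x + (2*(v-1)^2-1)*s)
          * ((v-1)*P0) := by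
    linear_combination ((x*((v+1)*x + (2*v^2-1)*s) - v*(2*v+1)*(x^2-1))
      * (v*x + (2*(v-1)^2-1)*s)) * hb
  have i1 := mul_le_mul_of_nonneg_left hIH
    (show (0:ℝ) ≤ (x*((v+1)*x + (2*v^2-1)*s) - v*(2*v+1)*(x^2-1)) * (v-1) from
      mul_nonneg hA2nn (by linarith))
  have i2 := mul_le_mul_of_nonneg_right hstar (show (0:ℝ) ≤ P1 by linarith)
  have hmain : (v*(v*x + (2*(v-1)^2-1)*s))
      * ((x*((v+1)*x + (2*v^2-1)*s) - v*(2*v+1)*(x^2-1)) * P2)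
      ≤ (v*(v*x + (2*(v-1)^2-1)*s)) * (((v+1)*x + (2*v^2-1)*s) * P1) := by
    linarith [hE, i1, i2]
  exact le_of_mul_le_mul_left hmain (by nlinarith [hD1pos, hv])


lemma claimA (x s : ℝ) (hx : 1 ≤ x) (hs0 : 0 ≤ s) (hs2 : s^2 = x^2-1) : ∀ m : ℕ,
    (x*(((m:ℝ)+2)*x + (2*((m:ℝ)+1)^2-1)*s) - ((m:ℝ)+1)*(2*((m:ℝ)+1)+1)*(x^2-1))
        * legendreP (m+1) x
      ≤ (((m:ℝ)+2)*x + (2*((m:ℝ)+1)^2-1)*s) * legendreP m x := by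
  intro m
  induction m with
  | zero =>
    rw [leg0, leg1]
    have hsx : s ≤ x := by nlinarith [hs2, hs0, hx]
    have h : (0:ℝ) ≤ (x^2-1)*(x-s) :=
      mul_nonneg (by nlinarith) (by linarith)
    push_cast
    nlinarith [h]
  | succ m ih =>
    have h1 := (mono x hx m).1
    have h2 := (mono x hx m).2
    have h3 := (mono x hx (m+1)).1
    have hb := bonnet m x
    have hstep := stepA x s ((m:ℝ)+2) (legendreP m x) (legendreP (m+1) x)
      (legendreP (m+2) x) hx hs0 hs2 (by norm_num) h1 h3
      (by push_cast at hb ⊢; linarith [hb])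
      (by push_cast at ih ⊢; nlinarith [ih])
    push_cast at hstep ⊢
    nlinarith [hstep]

set_option maxHeartbeats 1000000 in
theorem legendre_ratio_stronger_upper_bound (n : ℕ) (hn : 1 ≤ n) (x : ℝ) (hx : 1 ≤ x) :
    deriv (legendreP n) x / legendreP n x ≤
      (n : ℝ) ^ 2 * (2 * (n : ℝ) + 1) /
        (((n : ℝ) + 1) * x + (2 * (n : ℝ) ^ 2 - 1) * Real.sqrt (x ^ 2 - 1)) ∧
    (n : ℝ) ^ 2 * (2 * (n : ℝ) + 1) /
        (((n : ℝ) + 1) * x + (2 * (n : ℝ) ^ 2 - 1) * Real.sqrt (x ^ 2 - 1)) ≤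
      2 * (n : ℝ) ^ 2 / (x + (2 * (n : ℝ) - 1) * Real.sqrt (x ^ 2 - 1)) := by
  set s := Real.sqrt (x^2-1) with hs
  have hn1 : (1:ℝ) ≤ (n:ℝ) := by exact_mod_cast hn
  have hs0 : 0 ≤ s := Real.sqrt_nonneg _
  have hs2 : s^2 = x^2-1 := Real.sq_sqrt (by nlinarith)
  have hsx : s ≤ x := by nlinarith [hs2, hs0, hx]
  have hD : (0:ℝ) < ((n:ℝ)+1)*x + (2*(n:ℝ)^2-1)*s := by nlinarith [hn1, hx, hs0]
  have hD' : (0:ℝ) < x + (2*(n:ℝ)-1)*s := by nlinarith [hn1, hx, hs0]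
  have hP := (mono x hx n).1
  constructor
  · rw [div_le_div_iff₀ (by linarith) hD]
    obtain ⟨k, rfl⟩ : ∃ k, n = k+1 := ⟨n-1, by omega⟩
    push_cast
    rcases eq_or_lt_of_le hx with heq | hlt
    · -- x = 1
      have hx1 : x = 1 := heq.symm
      subst hx1
      have hsz : s = 0 := by nlinarith [hs2, hs0]
      rw [hsz, dval_one, val_one]
      push_cast
      nlinarith [hn1]
    · have hx2 : (0:ℝ) < x^2 - 1 := by nlinarith
      have hA := claimA x s hx hs0 hs2 k
      have hrel := rel1 k x
      have hE2 : (((k:ℝ)+2)*x + (2*((k:ℝ)+1)^2-1)*s) * ((x^2-1) * deriv (legendreP (k+1)) x)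
          = (((k:ℝ)+2)*x + (2*((k:ℝ)+1)^2-1)*s)
            * (((k:ℝ)+1) * (x * legendreP (k+1) x - legendreP k x)) := by
        rw [hrel]
      have i3 := mul_le_mul_of_nonneg_left hA (show (0:ℝ) ≤ (k:ℝ)+1 by positivity)
      have key : (x^2-1) * (deriv (legendreP (k+1)) x * (((k:ℝ)+1+1)*x + (2*((k:ℝ)+1)^2-1)*s))
          ≤ (x^2-1) * ((((k:ℝ)+1)^2*(2*((k:ℝ)+1)+1)) * legendreP (k+1) x) := by
        nlinarith [hE2, i3]
      have := le_of_mul_le_mul_left key hx2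
      nlinarith [this]
  · rw [div_le_div_iff₀ hD hD']
    linarith [mul_nonneg (by positivity : (0:ℝ) ≤ (n:ℝ)^2)
      (by linarith : (0:ℝ) ≤ x - s)]
end

section
/- Let n ∈ ℕ, n ≥ 1, λ > -1/2, and x ≥ 1. Then the ratios u_m(x) = (P_m^{(λ)})'(x)/P_m^{(λ)}(x) satisfy the recurrence u_{n+1}(x) = (n+1) · (n + 2λ + x·u_n(x)) / ((n+2λ)x + (x²-1)·u_n(x)). -/
/-- Chebyshev polynomials of the first kind (as real functions):
`T_0 = 1`, `T_1 = x`, `T_{n+2}(x) = 2x T_{n+1}(x) - T_n(x)`. -/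
noncomputable def chebT : ℕ → ℝ → ℝ
  | 0 => fun _ => 1
  | 1 => fun x => x
  | n + 2 => fun x => 2 * x * chebT (n + 1) x - chebT n x

/-- The ultraspherical (Gegenbauer) polynomials for `lam ≠ 0`, via
`P_0 = 1`, `P_1 = 2λx`, `(n+1)P_{n+1}(x) = 2(n+λ)x P_n(x) - (n+2λ-1)P_{n-1}(x)`. -/
noncomputable def gegenRec (lam : ℝ) : ℕ → ℝ → ℝ
  | 0 => fun _ => 1
  | 1 => fun x => 2 * lam * x
  | n + 2 => fun x =>
      (2 * ((n : ℝ) + 1 + lam) * x * gegenRec lam (n + 1) x -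
        ((n : ℝ) + 2 * lam) * gegenRec lam n x) / ((n : ℝ) + 2)

/-- The `n`-th ultraspherical polynomial `P_n^{(λ)}`; for `λ = 0` it is taken to be the
Chebyshev polynomial of the first kind `T_n`. -/
noncomputable def ultra (lam : ℝ) (n : ℕ) : ℝ → ℝ :=
  if lam = 0 then chebT n else gegenRec lam n

/-- The ratio `u_n(x) = (P_n^{(λ)})'(x) / P_n^{(λ)}(x)`. -/
noncomputable def uRatio (lam : ℝ) (n : ℕ) (x : ℝ) : ℝ :=
  deriv (ultra lam n) x / ultra lam n x


noncomputable def dchebT : ℕ → ℝ → ℝ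
  | 0 => fun _ => 0
  | 1 => fun _ => 1
  | n + 2 => fun x => 2 * chebT (n + 1) x + 2 * x * dchebT (n + 1) x - dchebT n x

noncomputable def dgegen (lam : ℝ) : ℕ → ℝ → ℝ
  | 0 => fun _ => 0
  | 1 => fun _ => 2 * lam
  | n + 2 => fun x =>
      (2 * ((n : ℝ) + 1 + lam) * gegenRec lam (n + 1) x
        + 2 * ((n : ℝ) + 1 + lam) * x * dgegen lam (n + 1) x
        - ((n : ℝ) + 2 * lam) * dgegen lam n x) / ((n : ℝ) + 2)

lemma chebT_hasDerivAt : ∀ n x, HasDerivAt (chebT n) (dchebT n x) x := by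
  intro n
  induction n using Nat.twoStepInduction with
  | zero => intro x; simpa [chebT, dchebT] using (hasDerivAt_const x (1:ℝ))
  | one => intro x; simpa [chebT, dchebT] using (hasDerivAt_id' x)
  | more n ih1 ih2 =>
    intro x
    have h1 : HasDerivAt (fun x : ℝ => 2 * x * chebT (n+1) x)
        (2 * chebT (n+1) x + 2 * x * dchebT (n+1) x) x := by
      simpa [Pi.mul_def] using (((hasDerivAt_id x).const_mul (2:ℝ)).mul (ih2 x))
    have := (h1.sub (ih1 x))
    simpa [chebT, dchebT, Pi.sub_def] using this

lemma gegen_hasDerivAt (lam : ℝ) : ∀ n x, HasDerivAt (gegenRec lam n) (dgegen lam n x) x := by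
  intro n
  induction n using Nat.twoStepInduction with
  | zero => intro x; simpa [gegenRec, dgegen] using (hasDerivAt_const x (1:ℝ))
  | one =>
    intro x
    simpa [gegenRec, dgegen] using ((hasDerivAt_id x).const_mul (2*lam))
  | more n ih1 ih2 =>
    intro x
    have h1 : HasDerivAt (fun x : ℝ => 2 * ((n : ℝ) + 1 + lam) * x * gegenRec lam (n+1) x)
        (2 * ((n : ℝ) + 1 + lam) * gegenRec lam (n+1) x
          + 2 * ((n : ℝ) + 1 + lam) * x * dgegen lam (n+1) x) x := by
      simpa [mul_assoc, mul_comm, mul_left_comm, Pi.mul_def] using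
        (((hasDerivAt_id x).const_mul (2 * ((n : ℝ) + 1 + lam))).mul (ih2 x))
    have := ((h1.sub ((ih1 x).const_mul ((n : ℝ) + 2 * lam))).div_const ((n : ℝ) + 2))
    simpa [gegenRec, dgegen] using this

noncomputable def chebU : ℕ → ℝ → ℝ
  | 0 => fun _ => 1
  | 1 => fun x => 2 * x
  | n + 2 => fun x => 2 * x * chebU (n + 1) x - chebU n x

lemma cheb_UT : ∀ n x, chebU (n+1) x = x * chebU n x + chebT (n+1) x ∧
    chebT (n+2) x = x * chebT (n+1) x + (x^2 - 1) * chebU n x := by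
  intro n
  induction n with
  | zero => intro x; constructor <;> (simp [chebU, chebT]; ring)
  | succ n ih =>
    intro x
    obtain ⟨h1, h2⟩ := ih x
    have hU : chebU (n+2) x = 2 * x * chebU (n+1) x - chebU n x := rfl
    have hT3 : chebT (n+3) x = 2 * x * chebT (n+2) x - chebT (n+1) x := rfl
    constructor
    · linear_combination hU + x * h1 - h2
    · linear_combination hT3 + x * h2 - (x^2 - 1) * h1

lemma dchebT_eq_U : ∀ n x, dchebT (n+1) x = ((n:ℝ)+1) * chebU n x := by
  intro n
  induction n using Nat.twoStepInduction with
  | zero => intro x; simp [dchebT, chebU]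
  | one => intro x; simp [dchebT, chebU, chebT]; ring
  | more n ih1 ih2 =>
    intro x
    obtain ⟨h1, h2⟩ := cheb_UT n x
    have hD : dchebT (n+3) x
        = 2 * chebT (n+2) x + 2 * x * dchebT (n+2) x - dchebT (n+1) x := rfl
    have hU : chebU (n+2) x = 2 * x * chebU (n+1) x - chebU n x := rfl
    have e1 := ih1 x
    have e2 := ih2 x
    push_cast at e1 e2 ⊢
    linear_combination hD + 2 * x * e2 - e1 - ((n:ℝ)+3) * hU - 2 * x * h1 + 2 * h2

lemma cheb_den (m : ℕ) (x : ℝ) :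
    ((m:ℝ)+1) * x * chebT (m+1) x + (x^2 - 1) * dchebT (m+1) x
      = ((m:ℝ)+1) * chebT (m+2) x := by
  have e := dchebT_eq_U m x
  have h2 := (cheb_UT m x).2
  linear_combination (x^2-1) * e - ((m:ℝ)+1) * h2

lemma cheb_num (m : ℕ) (x : ℝ) :
    ((m:ℝ)+2) * (((m:ℝ)+1) * chebT (m+1) x + x * dchebT (m+1) x)
      = ((m:ℝ)+1) * dchebT (m+2) x := by
  have e1 := dchebT_eq_U m x
  have e2 := dchebT_eq_U (m+1) x
  have h1 := (cheb_UT m x).1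
  push_cast at e2
  linear_combination ((m:ℝ)+2) * x * e1 - ((m:ℝ)+1) * e2 - ((m:ℝ)+1) * ((m:ℝ)+2) * h1

lemma chebT_pos : ∀ n, ∀ x : ℝ, 1 ≤ x → 1 ≤ chebT n x ∧ chebT n x ≤ chebT (n+1) x := by
  intro n
  induction n with
  | zero => intro x hx; constructor <;> simp [chebT]; exact hx
  | succ n ih =>
    intro x hx
    obtain ⟨h1, h2⟩ := ih x hx
    have hr : chebT (n+2) x = 2 * x * chebT (n+1) x - chebT n x := rfl
    constructor
    · linarith
    · nlinarith

lemma gegen_BC (lam : ℝ) : ∀ n, ∀ x : ℝ,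
    dgegen lam (n+1) x = x * dgegen lam n x + ((n:ℝ) + 2*lam) * gegenRec lam n x ∧
    x * dgegen lam (n+1) x - dgegen lam n x = ((n:ℝ)+1) * gegenRec lam (n+1) x := by
  intro n
  induction n with
  | zero =>
    intro x
    constructor <;> simp [dgegen, gegenRec] <;> ring
  | succ n ih =>
    intro x
    obtain ⟨ihB, ihC⟩ := ih x
    have hn2 : ((n:ℝ)+2) ≠ 0 := by positivity
    have hP : gegenRec lam (n+2) x =
        (2 * ((n : ℝ) + 1 + lam) * x * gegenRec lam (n + 1) x -
          ((n : ℝ) + 2 * lam) * gegenRec lam n x) / ((n : ℝ) + 2) := rfl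
    have hD : dgegen lam (n+2) x =
        (2 * ((n : ℝ) + 1 + lam) * gegenRec lam (n + 1) x
          + 2 * ((n : ℝ) + 1 + lam) * x * dgegen lam (n + 1) x
          - ((n : ℝ) + 2 * lam) * dgegen lam n x) / ((n : ℝ) + 2) := rfl
    have hP' : ((n:ℝ)+2) * gegenRec lam (n+2) x =
        2 * ((n : ℝ) + 1 + lam) * x * gegenRec lam (n + 1) x -
          ((n : ℝ) + 2 * lam) * gegenRec lam n x := by
      rw [hP]; field_simp
    have hD' : ((n:ℝ)+2) * dgegen lam (n+2) x =
        2 * ((n : ℝ) + 1 + lam) * gegenRec lam (n + 1) x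
          + 2 * ((n : ℝ) + 1 + lam) * x * dgegen lam (n + 1) x
          - ((n : ℝ) + 2 * lam) * dgegen lam n x := by
      rw [hD]; field_simp
    have hBnew : dgegen lam (n+2) x =
        x * dgegen lam (n+1) x + ((n:ℝ) + 1 + 2*lam) * gegenRec lam (n+1) x := by
      apply mul_left_cancel₀ hn2
      linear_combination hD' + ((n:ℝ) + 2*lam) * ihC
    constructor
    · push_cast
      linear_combination hBnew
    · push_cast
      linear_combination x * hBnew + x * ihC - ihB - hP'

lemma gegen_Aprime (lam : ℝ) (n : ℕ) (x : ℝ) :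
    ((n:ℝ) + 2*lam) * x * gegenRec lam n x + (x^2 - 1) * dgegen lam n x
      = ((n:ℝ)+1) * gegenRec lam (n+1) x := by
  obtain ⟨hB, hC⟩ := gegen_BC lam n x
  linear_combination hC - x * hB

lemma gegen_pos (lam : ℝ) (hlam : -(1/2 : ℝ) < lam) (hne : lam ≠ 0) :
    ∀ n, 1 ≤ n → ∀ x : ℝ, 1 ≤ x →
      0 < lam * gegenRec lam n x ∧ 0 ≤ lam * dgegen lam n x := by
  intro n hn
  induction n, hn using Nat.le_induction with
  | base =>
    intro x hx
    have hsq : 0 < lam * lam := mul_self_pos.mpr hne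
    constructor
    · have : gegenRec lam 1 x = 2 * lam * x := rfl
      rw [this]; nlinarith
    · have : dgegen lam 1 x = 2 * lam := rfl
      rw [this]; nlinarith
  | succ n hn ih =>
    intro x hx
    obtain ⟨hPpos, hDpos⟩ := ih x hx
    have hn1 : (1:ℝ) ≤ (n:ℝ) := by exact_mod_cast hn
    have hnl : 0 < (n:ℝ) + 2*lam := by nlinarith
    obtain ⟨hB, hC⟩ := gegen_BC lam n x
    have hA' := gegen_Aprime lam n x
    have hx0 : (0:ℝ) < x := by linarith
    have t1 : 0 < ((n:ℝ) + 2*lam) * x * (lam * gegenRec lam n x) :=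
      mul_pos (mul_pos hnl hx0) hPpos
    have t2 : 0 ≤ (x^2 - 1) * (lam * dgegen lam n x) :=
      mul_nonneg (by nlinarith) hDpos
    have hlA : ((n:ℝ)+1) * (lam * gegenRec lam (n+1) x)
        = ((n:ℝ) + 2*lam) * x * (lam * gegenRec lam n x)
          + (x^2 - 1) * (lam * dgegen lam n x) := by
      linear_combination (-lam) * hA'
    have hq : 0 < lam * gegenRec lam (n+1) x := by nlinarith
    constructor
    · push_cast; exact hq
    · have : lam * dgegen lam (n+1) x
          = x * (lam * dgegen lam n x) + ((n:ℝ) + 2*lam) * (lam * gegenRec lam n x) := by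
        linear_combination lam * hB
      push_cast
      rw [this]
      have := mul_pos hnl hPpos
      nlinarith


theorem ultra_ratio_recurrence (n : ℕ) (hn : 1 ≤ n) (lam : ℝ) (hlam : -(1 / 2) < lam)
    (x : ℝ) (hx : 1 ≤ x) :
    uRatio lam (n + 1) x =
      ((n : ℝ) + 1) * ((n : ℝ) + 2 * lam + x * uRatio lam n x) /
        (((n : ℝ) + 2 * lam) * x + (x ^ 2 - 1) * uRatio lam n x) := by
  unfold uRatio ultra
  by_cases hl : lam = 0
  · subst hl
    simp only [if_pos rfl, if_true]
    obtain ⟨m, rfl⟩ : ∃ m, n = m + 1 := ⟨n - 1, (Nat.succ_pred_eq_of_pos hn).symm⟩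
    have dr : ∀ k, deriv (chebT k) x = dchebT k x := fun k => (chebT_hasDerivAt k x).deriv
    rw [dr, dr]
    have hp : 0 < chebT (m+1) x := lt_of_lt_of_le one_pos (chebT_pos (m+1) x hx).1
    have hq : 0 < chebT (m+2) x := lt_of_lt_of_le one_pos (chebT_pos (m+2) x hx).1
    have hp' := hp.ne'
    have hq' := hq.ne'
    have hden := cheb_den m x
    have hnum := cheb_num m x
    have hD : ((m:ℝ)+1) * x + (x^2 - 1) * (dchebT (m+1) x / chebT (m+1) x)
        = ((m:ℝ)+1) * chebT (m+2) x / chebT (m+1) x := by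
      field_simp
      linear_combination hden
    have hm1 : (0:ℝ) < (m:ℝ) + 1 := by positivity
    have hden_ne : ((m:ℝ)+1) * x + (x^2 - 1) * (dchebT (m+1) x / chebT (m+1) x) ≠ 0 := by
      rw [hD]
      exact ne_of_gt (div_pos (mul_pos hm1 hq) hp)
    have hden_ne2 : ((↑(m+1) : ℝ) + 2 * 0) * x + (x ^ 2 - 1) * (dchebT (m+1) x / chebT (m+1) x) ≠ 0 := by
      push_cast
      convert hden_ne using 2
      ring
    rw [div_eq_div_iff hq' hden_ne2]
    push_cast
    field_simp
    linear_combination dchebT (m+2) x * hden - chebT (m+2) x * hnum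
  · simp only [if_neg hl]
    have dr : ∀ k, deriv (gegenRec lam k) x = dgegen lam k x :=
      fun k => (gegen_hasDerivAt lam k x).deriv
    rw [dr, dr]
    obtain ⟨hPp, hPd⟩ := gegen_pos lam hlam hl n hn x hx
    obtain ⟨hQp, hQd⟩ := gegen_pos lam hlam hl (n+1) (by omega) x hx
    have hp' : gegenRec lam n x ≠ 0 := by
      intro h; rw [h] at hPp; simp at hPp
    have hq' : gegenRec lam (n+1) x ≠ 0 := by
      intro h; rw [h] at hQp; simp at hQp
    have hB := (gegen_BC lam n x).1
    have hA' := gegen_Aprime lam n x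
    have hpq : 0 < gegenRec lam (n+1) x / gegenRec lam n x := by
      rcases lt_or_gt_of_ne hl with h | h
      · have h1 : gegenRec lam n x < 0 := by nlinarith
        have h2 : gegenRec lam (n+1) x < 0 := by nlinarith
        exact div_pos_of_neg_of_neg h2 h1
      · have h1 : 0 < gegenRec lam n x := by nlinarith
        have h2 : 0 < gegenRec lam (n+1) x := by nlinarith
        exact div_pos h2 h1
    have hn1 : (0:ℝ) < (n:ℝ) + 1 := by positivity
    have hD : ((n:ℝ) + 2*lam) * x + (x^2 - 1) * (dgegen lam n x / gegenRec lam n x)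
        = ((n:ℝ)+1) * gegenRec lam (n+1) x / gegenRec lam n x := by
      field_simp
      linear_combination hA'
    have hden_ne : ((n:ℝ) + 2*lam) * x + (x^2 - 1) * (dgegen lam n x / gegenRec lam n x) ≠ 0 := by
      rw [hD, mul_div_assoc]
      exact ne_of_gt (mul_pos hn1 hpq)
    rw [div_eq_div_iff hq' hden_ne]
    field_simp
    linear_combination dgegen lam (n+1) x * hA'
      + ((n:ℝ)+1) * gegenRec lam (n+1) x * hB
end
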